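/- Let $\lambda, \sigma_\mu, \delta > 0$, $g = \frac{2\lambda}{\sigma_\mu^2 (e^{\lambda\delta} - e^{-\lambda\delta})}$, and let $B_N$ be the $N \times N$ tridiagonal matrix with diagonal entries $e^{\lambda\delta} + e^{-\lambda\delta}$ except the last diagonal entry which is $e^{\lambda\delta}$, and off-diagonal entries $-1$. Let $\Sigma_N$ be the covariance matrix of $(\mu_{\delta}, \mu_{2\delta}, \ldots, \mu_{N\delta})$ where $\mu$ is an OU process with $\mu_0 = 0$, i.e., $(\Sigma_N)_{st} = \frac{\sigma_\mu^2}{2\lambda} e^{-\lambda\delta(s+t)}(e^{2\lambda\delta(s \wedge t)} - 1)$. Then $\Sigma_N^{-1} = g B_N$, i.e., $g \Sigma_N B_N = I_N$. -/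

import Mathlib

open Matrix Finset

private lemma exp_zpow' (L : ℝ) (n : ℤ) : Real.exp ((n : ℝ) * L) = Real.exp L ^ n := by
  rw [← Real.rpow_intCast, Real.rpow_def_of_pos (Real.exp_pos L), Real.log_exp, mul_comm]

/-- The inverse of the covariance matrix of an OU process sampled at times `δ, 2δ, …, Nδ`
is the explicit tridiagonal matrix `g B_N`: `g Σ_N B_N = I` and `Σ_N⁻¹ = g B_N`. -/
theorem stmt_5 (lam σμ δ : ℝ) (hlam : 0 < lam) (hσμ : 0 < σμ) (hδ : 0 < δ)
    (N : ℕ) (g : ℝ)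
    (hg : g = 2 * lam / (σμ ^ 2 * (Real.exp (lam * δ) - Real.exp (-(lam * δ)))))
    (Sig B : Matrix (Fin N) (Fin N) ℝ)
    (hSig : Sig = Matrix.of fun s t : Fin N =>
      σμ ^ 2 / (2 * lam) *
        Real.exp (-(lam * δ * (((s : ℕ) + 1 : ℝ) + ((t : ℕ) + 1 : ℝ)))) *
        (Real.exp (2 * lam * δ * min (((s : ℕ) + 1 : ℝ)) (((t : ℕ) + 1 : ℝ))) - 1))
    (hB : B = Matrix.of fun s t : Fin N =>
      if s = t then
        (if (s : ℕ) = N - 1 then Real.exp (lam * δ)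
         else Real.exp (lam * δ) + Real.exp (-(lam * δ)))
      else if (s : ℕ) + 1 = (t : ℕ) ∨ (t : ℕ) + 1 = (s : ℕ) then -1 else 0) :
    g • (Sig * B) = 1 ∧ Sig⁻¹ = g • B := by
  have hL0 : 0 < lam * δ := mul_pos hlam hδ
  set E := Real.exp (lam * δ) with hEdef
  have hEpos : 0 < E := Real.exp_pos _
  have hE0 : E ≠ 0 := ne_of_gt hEpos
  have hE1 : 1 < E := by
    have := Real.add_one_le_exp (lam * δ); rw [← hEdef] at this; linarith
  have hEinv : Real.exp (-(lam * δ)) = E⁻¹ := by rw [Real.exp_neg, hEdef]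
  have hdiff : 0 < E - E⁻¹ := by
    have h1 : E * E⁻¹ = 1 := mul_inv_cancel₀ hE0
    have h2 : 0 < E⁻¹ := inv_pos.mpr hEpos
    nlinarith
  set c := σμ ^ 2 / (2 * lam) with hc
  have hgc : g * (c * (E - E⁻¹)) = 1 := by
    have hne : σμ ^ 2 * (E - E⁻¹) ≠ 0 := ne_of_gt (mul_pos (pow_pos hσμ 2) hdiff)
    have h2 : σμ ^ 2 / (2 * lam) * (E - E⁻¹) = σμ ^ 2 * (E - E⁻¹) / (2 * lam) := by ring
    rw [hg, hEinv, hc, h2, div_mul_div_comm, mul_comm (σμ ^ 2 * (E - E⁻¹)) (2 * lam),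
      div_self (mul_ne_zero (mul_ne_zero (by norm_num) (ne_of_gt hlam)) hne)]
  set Sz : ℤ → ℤ → ℝ := fun a b => c * (E ^ (2 * min a b - (a + b)) - E ^ (-(a + b)))
    with hSzdef
  -- Sz vanishes at second argument 0
  have hSz0 : ∀ a : ℤ, 0 ≤ a → Sz a 0 = 0 := by
    intro a ha
    simp only [hSzdef]
    rw [min_eq_right ha, show 2 * (0:ℤ) - (a + 0) = -(a + 0) by ring]
    ring
  -- interior column recurrence
  have rec0 : ∀ a b : ℤ, Sz a (b+1) * (E + E⁻¹) - Sz a (b+1+1) - Sz a b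
      = if a = b + 1 then c * (E - E⁻¹) else 0 := by
    intro a b
    rcases lt_trichotomy a (b+1) with h | h | h
    · have h1 : min a (b+1) = a := min_eq_left (by omega)
      have h2 : min a (b+1+1) = a := min_eq_left (by omega)
      have h3 : min a b = a := min_eq_left (by omega)
      rw [if_neg (show ¬(a = b + 1) by omega)]
      simp only [hSzdef, h1, h2, h3]
      rw [show 2*a - (a+(b+1)) = (a-b) + (-1) by ring,
          show (-(a+(b+1))) = (-(a+b)) + (-1) by ring,
          show 2*a - (a+(b+1+1)) = ((a-b) + (-1)) + (-1) by ring,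
          show (-(a+(b+1+1))) = ((-(a+b)) + (-1)) + (-1) by ring,
          show 2*a - (a+b) = a - b by ring]
      simp only [zpow_add₀ hE0, _root_.zpow_neg_one]
      field_simp
      ring
    · subst h
      have h1 : min (b+1) (b+1+1) = b+1 := min_eq_left (by omega)
      have h3 : min (b+1) b = b := min_eq_right (by omega)
      rw [if_pos rfl]
      simp only [hSzdef, min_self, h1, h3]
      rw [show 2*(b+1) - ((b+1)+(b+1)) = (0:ℤ) by ring,
          show (-((b+1)+(b+1))) = (-(2*b+2)) by ring,
          show 2*(b+1) - ((b+1)+(b+1+1)) = (-1 : ℤ) by ring,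
          show (-((b+1)+(b+1+1))) = (-(2*b+2)) + (-1) by ring,
          show 2*b - ((b+1)+b) = (-1 : ℤ) by ring,
          show (-((b+1)+b)) = (-(2*b+2)) + 1 by ring]
      simp only [zpow_add₀ hE0, zpow_zero, zpow_one, _root_.zpow_neg_one]
      field_simp
      ring
    · have h1 : min a (b+1) = b+1 := min_eq_right (by omega)
      have h2 : min a (b+1+1) = b+1+1 := min_eq_right (by omega)
      have h3 : min a b = b := min_eq_right (by omega)
      rw [if_neg (show ¬(a = b + 1) by omega)]
      simp only [hSzdef, h1, h2, h3]
      rw [show 2*(b+1) - (a+(b+1)) = (b-a) + 1 by ring,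
          show (-(a+(b+1))) = (-(a+b)) + (-1) by ring,
          show 2*(b+1+1) - (a+(b+1+1)) = ((b-a) + 1) + 1 by ring,
          show (-(a+(b+1+1))) = ((-(a+b)) + (-1)) + (-1) by ring,
          show 2*b - (a+b) = b - a by ring]
      simp only [zpow_add₀ hE0, zpow_one, _root_.zpow_neg_one]
      field_simp
      ring
  -- last column recurrence
  have rec1 : ∀ a b : ℤ, a ≤ b + 1 → Sz a (b+1) * E - Sz a b
      = if a = b + 1 then c * (E - E⁻¹) else 0 := by
    intro a b hab
    rcases eq_or_lt_of_le hab with heq | hlt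
    · subst heq
      have h3 : min (b+1) b = b := min_eq_right (by omega)
      rw [if_pos rfl]
      simp only [hSzdef, min_self, h3]
      rw [show 2*(b+1) - ((b+1)+(b+1)) = (0:ℤ) by ring,
          show (-((b+1)+(b+1))) = (-(2*b+2)) by ring,
          show 2*b - ((b+1)+b) = (-1 : ℤ) by ring,
          show (-((b+1)+b)) = (-(2*b+2)) + 1 by ring]
      simp only [zpow_add₀ hE0, zpow_zero, zpow_one, _root_.zpow_neg_one]
      field_simp
      ring
    · have h1 : min a (b+1) = a := min_eq_left (by omega)
      have h3 : min a b = a := min_eq_left (by omega)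
      rw [if_neg (show ¬(a = b + 1) by omega)]
      simp only [hSzdef, h1, h3]
      rw [show 2*a - (a+(b+1)) = (a-b) + (-1) by ring,
          show (-(a+(b+1))) = (-(a+b)) + (-1) by ring,
          show 2*a - (a+b) = a - b by ring]
      simp only [zpow_add₀ hE0, _root_.zpow_neg_one]
      field_simp
      ring
  -- the covariance entries in terms of Sz
  have hentry : ∀ a b : ℕ,
      c * Real.exp (-(lam * δ * (((a : ℕ) + 1 : ℝ) + ((b : ℕ) + 1 : ℝ)))) *
        (Real.exp (2 * lam * δ * min (((a : ℕ) + 1 : ℝ)) (((b : ℕ) + 1 : ℝ))) - 1)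
      = Sz ((a:ℤ)+1) ((b:ℤ)+1) := by
    intro a b
    have harg1 : -(lam * δ * (((a:ℝ) + 1) + ((b:ℝ) + 1)))
        + 2 * lam * δ * min ((a:ℝ)+1) ((b:ℝ)+1)
        = ((2 * min ((a:ℤ)+1) ((b:ℤ)+1) - (((a:ℤ)+1) + ((b:ℤ)+1)) : ℤ) : ℝ) * (lam * δ) := by
      push_cast
      ring
    have harg2 : -(lam * δ * (((a:ℝ) + 1) + ((b:ℝ) + 1)))
        = ((-(((a:ℤ)+1) + ((b:ℤ)+1)) : ℤ) : ℝ) * (lam * δ) := by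
      push_cast
      ring
    have expand : c * Real.exp (-(lam * δ * (((a:ℝ) + 1) + ((b:ℝ) + 1)))) *
        (Real.exp (2 * lam * δ * min ((a:ℝ)+1) ((b:ℝ)+1)) - 1)
        = c * (Real.exp (-(lam * δ * (((a:ℝ) + 1) + ((b:ℝ) + 1)))
            + 2 * lam * δ * min ((a:ℝ)+1) ((b:ℝ)+1))
          - Real.exp (-(lam * δ * (((a:ℝ) + 1) + ((b:ℝ) + 1))))) := by
      rw [Real.exp_add]; ring
    rw [expand, harg1, harg2, exp_zpow', exp_zpow']
  -- the key entrywise computation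
  have key : ∀ s t : Fin N, (Sig * B) s t
      = if (s : ℕ) = (t : ℕ) then c * (E - E⁻¹) else 0 := by
    intro s t
    set sn := (s : ℕ) with hsn
    set tn := (t : ℕ) with htn
    have hsN : sn < N := s.isLt
    have htN : tn < N := t.isLt
    rw [Matrix.mul_apply]
    have hconv : (∑ j : Fin N, Sig s j * B j t)
        = ∑ k ∈ Finset.range N, (fun k : ℕ => Sz ((sn:ℤ)+1) ((k:ℤ)+1) *
            (if k = tn then (if k = N - 1 then E else E + E⁻¹)
             else if k + 1 = tn ∨ tn + 1 = k then (-1:ℝ) else 0)) k := by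
      rw [← Fin.sum_univ_eq_sum_range]
      apply Finset.sum_congr rfl
      intro j _
      show Sig s j * B j t = Sz ((sn:ℤ)+1) (((j:ℕ):ℤ)+1) *
            (if (j:ℕ) = tn then (if (j:ℕ) = N - 1 then E else E + E⁻¹)
             else if (j:ℕ) + 1 = tn ∨ tn + 1 = (j:ℕ) then (-1:ℝ) else 0)
      congr 1
      · rw [hSig]
        simp only [Matrix.of_apply]
        exact hentry sn (j:ℕ)
      · rw [hB]
        simp only [Matrix.of_apply, hEinv, Fin.ext_iff]
        rfl
    rw [hconv]
    have hsplit : ∀ k ∈ Finset.range N, (fun k : ℕ => Sz ((sn:ℤ)+1) ((k:ℤ)+1) *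
            (if k = tn then (if k = N - 1 then E else E + E⁻¹)
             else if k + 1 = tn ∨ tn + 1 = k then (-1:ℝ) else 0)) k
        = (if k = tn then Sz ((sn:ℤ)+1) ((k:ℤ)+1) * (if tn = N - 1 then E else E + E⁻¹) else 0)
          + (if k = tn + 1 then -(Sz ((sn:ℤ)+1) ((k:ℤ)+1)) else 0)
          + (if k + 1 = tn then -(Sz ((sn:ℤ)+1) ((k:ℤ)+1)) else 0) := by
      intro k _
      show Sz ((sn:ℤ)+1) ((k:ℤ)+1) *
            (if k = tn then (if k = N - 1 then E else E + E⁻¹)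
             else if k + 1 = tn ∨ tn + 1 = k then (-1:ℝ) else 0) = _
      by_cases h1 : k = tn
      · subst h1
        rw [if_pos rfl, if_pos rfl, if_neg (show ¬(tn = tn + 1) by omega),
          if_neg (show ¬(tn + 1 = tn) by omega)]
        ring
      · rw [if_neg h1, if_neg h1]
        by_cases h2 : k = tn + 1
        · rw [if_pos h2, if_pos (show k + 1 = tn ∨ tn + 1 = k from Or.inr (by omega)),
            if_neg (show ¬(k + 1 = tn) by omega)]
          ring
        · rw [if_neg h2]
          by_cases h3 : k + 1 = tn
          · rw [if_pos (show k + 1 = tn ∨ tn + 1 = k from Or.inl h3), if_pos h3]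
            ring
          · rw [if_neg h3, if_neg (show ¬(k + 1 = tn ∨ tn + 1 = k) by omega)]
            ring
    rw [Finset.sum_congr rfl hsplit, Finset.sum_add_distrib, Finset.sum_add_distrib,
      Finset.sum_ite_eq' (Finset.range N) tn, Finset.sum_ite_eq' (Finset.range N) (tn+1)]
    have h3sum : (∑ k ∈ Finset.range N, if k + 1 = tn then -(Sz ((sn:ℤ)+1) ((k:ℤ)+1)) else 0)
        = -(Sz ((sn:ℤ)+1) (tn:ℤ)) := by
      obtain ⟨m, hm⟩ | hm0 : (∃ m, tn = m + 1) ∨ tn = 0 := by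
        rcases Nat.eq_zero_or_pos tn with h | h
        · exact Or.inr h
        · exact Or.inl ⟨tn - 1, by omega⟩
      · have hstep : ∀ k ∈ Finset.range N,
            (if k + 1 = tn then -(Sz ((sn:ℤ)+1) ((k:ℤ)+1)) else 0)
            = (if k = m then -(Sz ((sn:ℤ)+1) ((k:ℤ)+1)) else 0) := by
          intro k _
          by_cases h : k = m
          · rw [if_pos (show k + 1 = tn by omega), if_pos h]
          · rw [if_neg (show ¬(k + 1 = tn) by omega), if_neg h]
        rw [Finset.sum_congr rfl hstep, Finset.sum_ite_eq' (Finset.range N) m,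
          if_pos (Finset.mem_range.mpr (show m < N by omega)), hm]
        push_cast
        ring_nf
      · have hstep : ∀ k ∈ Finset.range N,
            (if k + 1 = tn then -(Sz ((sn:ℤ)+1) ((k:ℤ)+1)) else 0) = (0:ℝ) := by
          intro k _
          rw [if_neg (show ¬(k + 1 = tn) by omega)]
        rw [Finset.sum_congr rfl hstep, Finset.sum_const, smul_zero]
        rw [hm0]
        push_cast
        rw [hSz0 ((sn:ℤ)+1) (by omega)]
        ring
    rw [h3sum, if_pos (Finset.mem_range.mpr htN)]
    by_cases hlast : tn = N - 1
    · rw [if_neg (show ¬(tn + 1 ∈ Finset.range N) by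
          simp only [Finset.mem_range]; omega), if_pos hlast]
      have hr := rec1 ((sn:ℤ)+1) (tn:ℤ) (by omega)
      rcases eq_or_ne sn tn with hd | hd
      · rw [if_pos (by omega : ((sn:ℤ)+1 = (tn:ℤ)+1))] at hr
        rw [if_pos hd]
        linear_combination hr
      · rw [if_neg (by omega : ¬((sn:ℤ)+1 = (tn:ℤ)+1))] at hr
        rw [if_neg hd]
        linear_combination hr
    · rw [if_pos (Finset.mem_range.mpr (show tn + 1 < N by omega)), if_neg hlast]
      have hcast : (((tn+1 : ℕ)):ℤ) + 1 = ((tn:ℤ)+1) + 1 := by push_cast; ring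
      rw [hcast]
      have hr := rec0 ((sn:ℤ)+1) (tn:ℤ)
      rcases eq_or_ne sn tn with hd | hd
      · rw [if_pos (by omega : ((sn:ℤ)+1 = (tn:ℤ)+1))] at hr
        rw [if_pos hd]
        linear_combination hr
      · rw [if_neg (by omega : ¬((sn:ℤ)+1 = (tn:ℤ)+1))] at hr
        rw [if_neg hd]
        linear_combination hr
  have part1 : g • (Sig * B) = 1 := by
    ext s t
    rw [Matrix.smul_apply, Matrix.one_apply, smul_eq_mul, key s t]
    rcases eq_or_ne s t with h | h
    · subst h
      rw [if_pos rfl, if_pos rfl]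
      exact hgc
    · rw [if_neg (fun hh => h (Fin.val_injective hh)), mul_zero, if_neg h]
  refine ⟨part1, Matrix.inv_eq_right_inv ?_⟩
  rw [Matrix.mul_smul]
  exact part1
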